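/- (Uniqueness for the implicit θ-scheme.) Let H and K be real inner product spaces, B : H → K a linear map, τ > 0, θ ∈ [1/2, 1], N ∈ ℕ, and let E⁰, E¹, …, E^N ∈ H satisfy E⁰ = 0 and, for every 1 ≤ n ≤ N and every v ∈ H, ⟨(Eⁿ − Eⁿ⁻¹)/τ, v⟩ + ⟨B(θ·Eⁿ + (1−θ)·Eⁿ⁻¹), B v⟩ = 0. Then Eⁿ = 0 for every 0 ≤ n ≤ N. -/
import Mathlib


open scoped RealInnerProductSpace

theorem theta_scheme_uniqueness
    {H K : Type*} [NormedAddCommGroup H] [InnerProductSpace ℝ H]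
    [NormedAddCommGroup K] [InnerProductSpace ℝ K]
    (B : H →ₗ[ℝ] K) (τ θ : ℝ) (hτ : 0 < τ) (hθ : θ ∈ Set.Icc (1/2 : ℝ) 1)
    (N : ℕ) (E : ℕ → H) (hE0 : E 0 = 0)
    (hrec : ∀ n, 1 ≤ n → n ≤ N → ∀ v : H,
      ⟪(1 / τ) • (E n - E (n - 1)), v⟫ +
        ⟪B (θ • E n + (1 - θ) • E (n - 1)), B v⟫ = 0) :
    ∀ n ≤ N, E n = 0 := by
  intro n hn
  induction n with
  | zero => exact hE0
  | succ m ih =>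
    have hprev : E m = 0 := ih (Nat.le_of_succ_le hn)
    have h := hrec (m + 1) (Nat.succ_le_succ (Nat.zero_le m)) hn (E (m + 1))
    simp only [Nat.add_sub_cancel, hprev, smul_zero, add_zero, sub_zero] at h
    rw [real_inner_smul_left, real_inner_self_eq_norm_sq, map_smul,
      real_inner_smul_left, real_inner_self_eq_norm_sq] at h
    have hθ0 : 0 < θ := lt_of_lt_of_le (by norm_num) hθ.1
    have h1 : 0 ≤ 1 / τ * ‖E (m + 1)‖ ^ 2 :=
      mul_nonneg (by positivity) (sq_nonneg _)
    have h2 : 0 ≤ θ * ‖B (E (m + 1))‖ ^ 2 :=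
      mul_nonneg hθ0.le (sq_nonneg _)
    have : 1 / τ * ‖E (m + 1)‖ ^ 2 = 0 := by linarith
    have : ‖E (m + 1)‖ ^ 2 = 0 := by
      have hτ' : 1 / τ ≠ 0 := by positivity
      exact (mul_eq_zero.mp this).resolve_left hτ'
    simpa using pow_eq_zero_iff (n := 2) (by norm_num) |>.mp this
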